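/- Let C be a Galois category and let p, p' : C → FinSet be two fibre functors on C. Then p and p' are (non-canonically) naturally isomorphic. -/

import Mathlib

/-!
STATEMENT 15: Any two fibre functors on a Galois category are (non-canonically) isomorphic.
-/

open CategoryTheory PreGaloisCategory

universe u v w

namespace Stmt15Aux

open CategoryTheory Limits Functor PreGaloisCategory PreGaloisCategory.PointedGaloisObject

variable {C : Type u} [Category.{v} C] [GaloisCategory C]

section Specialized

variable (F G : C ⥤ FintypeCat.{v}) [FiberFunctor F] [FiberFunctor G]

set_option maxHeartbeats 1000000 in
/-- There exists a natural transformation between any two fiber functors. -/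
lemma nonempty_hom : Nonempty (F ⟶ G) := by
  have h1 : ∀ j : PointedGaloisObject F, Finite ((incl F ⋙ G ⋙ FintypeCat.incl).obj j) :=
    fun j ↦ inferInstanceAs (Finite (G.obj j.obj))
  have h2 : ∀ j : PointedGaloisObject F, Nonempty ((incl F ⋙ G ⋙ FintypeCat.incl).obj j) :=
    fun j ↦ nonempty_fiber_of_isConnected G j.obj
  obtain ⟨s, hs⟩ := nonempty_sections_of_finite_cofiltered_system
    (incl F ⋙ G ⋙ FintypeCat.incl)
  -- build a cocone on `(incl F).op ⋙ coyoneda` with point `G ⋙ FintypeCat.incl`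
  let coc : Cocone ((incl F).op ⋙ coyoneda) :=
  { pt := G ⋙ FintypeCat.incl
    ι :=
    { app := fun A ↦
      { app := fun X ↦ ↾fun (f : (A.unop.obj : C) ⟶ X) ↦ G.map f (s A.unop)
        naturality := fun X Y g ↦ by
          ext (f : (A.unop.obj : C) ⟶ X)
          show G.map (f ≫ g) (s A.unop) = G.map g (G.map f (s A.unop))
          rw [G.map_comp]
          rfl }
      naturality := fun A B f ↦ by
        ext X (u : (A.unop.obj : C) ⟶ X)
        have hsec : G.map f.unop.val (s B.unop) = s A.unop := hs f.unop
        show G.map (f.unop.val ≫ u) (s B.unop) = G.map u (s A.unop)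
        rw [G.map_comp]
        exact congrArg (fun z ↦ G.map u z) hsec } }
  let t : (F ⋙ FintypeCat.incl) ⟶ (G ⋙ FintypeCat.incl) := (isColimit F).desc coc
  exact ⟨{ app := fun X ↦ ⟨t.app X⟩
           naturality := fun X Y f ↦ by
             ext x
             exact NatTrans.naturality_apply t f x }⟩

/-- Every component of a natural transformation of fiber functors is surjective. -/
lemma app_surjective (h : F ⟶ G) (X : C) : Function.Surjective (h.app X) := by
  intro y
  obtain ⟨A, f, b, hgal, hfb⟩ := exists_hom_from_galois_of_fiber G X y
  obtain ⟨a⟩ := nonempty_fiber_of_isConnected F A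
  obtain ⟨σ, hσ⟩ := MulAction.IsPretransitive.exists_smul_eq (M := Aut A) (h.app A a) b
  refine ⟨F.map (σ.hom ≫ f) a, ?_⟩
  have hnat : h.app X (F.map (σ.hom ≫ f) a) = G.map (σ.hom ≫ f) (h.app A a) :=
    FunctorToFintypeCat.naturality F G h (σ.hom ≫ f) a
  rw [hnat, G.map_comp, FintypeCat.comp_apply]
  have : G.map σ.hom (h.app A a) = b := hσ
  rw [this, hfb]

attribute [local instance] FintypeCat.fintype in
/-- Any two fiber functors into `FintypeCat.{v}` are isomorphic. -/
lemma nonempty_iso : Nonempty (F ≅ G) := by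
  obtain ⟨h⟩ := nonempty_hom F G
  obtain ⟨h'⟩ := nonempty_hom G F
  have hiso : ∀ X : C, IsIso (h.app X) := fun X ↦ by
    rw [ConcreteCategory.isIso_iff_bijective]
    have hsurj := app_surjective F G h X
    have hsurj' := app_surjective G F h' X
    have hcard : Fintype.card (G.obj X) ≤ Fintype.card (F.obj X) :=
      Fintype.card_le_of_surjective _ hsurj
    have hcard' : Fintype.card (F.obj X) ≤ Fintype.card (G.obj X) :=
      Fintype.card_le_of_surjective _ hsurj'
    exact (Fintype.bijective_iff_surjective_and_card (h.app X)).2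
      ⟨hsurj, le_antisymm hcard' hcard⟩
  have : IsIso h := NatIso.isIso_of_isIso_app h
  exact ⟨asIso h⟩

end Specialized

end Stmt15Aux

open Stmt15Aux

theorem stmt_15 {C : Type u} [Category.{v} C] [GaloisCategory C]
    (p p' : C ⥤ FintypeCat.{w}) [FiberFunctor p] [FiberFunctor p'] :
    Nonempty (p ≅ p') := by
  let q : C ⥤ FintypeCat.{v} := p ⋙ FintypeCat.uSwitch.{w, v}
  let q' : C ⥤ FintypeCat.{v} := p' ⋙ FintypeCat.uSwitch.{w, v}
  letI : FiberFunctor q := FiberFunctor.comp_right _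
  letI : FiberFunctor q' := FiberFunctor.comp_right _
  obtain ⟨i⟩ := nonempty_iso q q'
  let e (Y : C) : q.obj Y ≃ p.obj Y := (p.obj Y).uSwitchEquiv
  let e' (Y : C) : q'.obj Y ≃ p'.obj Y := (p'.obj Y).uSwitchEquiv
  let gapp (Y : C) : p.obj Y ≅ p'.obj Y := FintypeCat.equivEquivIso <|
    (e Y).symm.trans <| (FintypeCat.equivEquivIso.symm (i.app Y)).trans (e' Y)
  refine ⟨NatIso.ofComponents gapp <| fun {X Y} f ↦ ?_⟩
  ext x
  simp only [FintypeCat.comp_apply, FintypeCat.equivEquivIso_apply_hom,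
    Equiv.trans_apply, FintypeCat.equivEquivIso_symm_apply_apply, Iso.app_hom, gapp, e, e']
  erw [FintypeCat.uSwitchEquiv_naturality (p'.map f)]
  rw [← Functor.comp_map]
  erw [← NatTrans.naturality_apply]
  simp only [Functor.comp_obj, Functor.comp_map, q, q']
  rw [FintypeCat.uSwitchEquiv_symm_naturality (p.map f)]
  rfl
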